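/- Let (V, ω) be a finite-dimensional real symplectic vector space, J a compatible complex structure, and ⟨x,y⟩ = ω(x, Jy) the induced inner product. Let X ⊂ V be a real linear subspace and define the angle ∠(X) = sup over nonzero y ∈ JX of inf over nonzero x ∈ X of ∠(x,y). Then for all x ∈ X and y in the symplectic orthogonal complement X^ω, one has |⟨x,y⟩| ≤ |x|·|y|·√(2 − 2 cos ∠(X)). -/

import Mathlib

/-- The angle between two vectors with respect to the inner product `inn`,
`∠(x,y) = arccos (⟨x,y⟩ / (|x|·|y|))`. -/
noncomputable def vAngle {V : Type*} [AddCommGroup V] [Module ℝ V]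
    (inn : V → V → ℝ) (x y : V) : ℝ :=
  Real.arccos (inn x y / (Real.sqrt (inn x x) * Real.sqrt (inn y y)))

/-- The angle of a subspace `X`: `∠(X) = sup_{0 ≠ y ∈ JX} inf_{0 ≠ x ∈ X} ∠(x, y)`. -/
noncomputable def subspaceAngle {V : Type*} [AddCommGroup V] [Module ℝ V]
    (inn : V → V → ℝ) (J : V →ₗ[ℝ] V) (X : Submodule ℝ V) : ℝ :=
  sSup {θ : ℝ | ∃ y ∈ X.map J, y ≠ 0 ∧
    θ = sInf {φ : ℝ | ∃ x ∈ X, x ≠ 0 ∧ φ = vAngle inn x y}}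

section helpers
variable {V : Type*} [AddCommGroup V] [Module ℝ V]
  (ω : V →ₗ[ℝ] V →ₗ[ℝ] ℝ) (J : V →ₗ[ℝ] V)

lemma inn_symm' (hanti : ∀ x y : V, ω x y = - ω y x) (hJ : ∀ x : V, J (J x) = -x)
    (hcompat : ∀ x y : V, ω (J x) (J y) = ω x y) (a b : V) :
    ω a (J b) = ω b (J a) := by
  have h1 : ω b (J a) = ω (J b) (J (J a)) := (hcompat b (J a)).symm
  rw [h1, hJ a, map_neg, hanti (J b) a, neg_neg]

lemma inn_nonneg' (hpos : ∀ x : V, x ≠ 0 → 0 < ω x (J x)) (a : V) :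
    0 ≤ ω a (J a) := by
  rcases eq_or_ne a 0 with rfl | h
  · simp
  · exact (hpos a h).le

lemma inn_cauchy' (hanti : ∀ x y : V, ω x y = - ω y x) (hJ : ∀ x : V, J (J x) = -x)
    (hcompat : ∀ x y : V, ω (J x) (J y) = ω x y)
    (hpos : ∀ x : V, x ≠ 0 → 0 < ω x (J x)) (a b : V) :
    |ω a (J b)| ≤ Real.sqrt (ω a (J a)) * Real.sqrt (ω b (J b)) := by
  rcases eq_or_ne a 0 with rfl | ha
  · simp
  have hA : 0 < ω a (J a) := hpos a ha
  have hB : 0 ≤ ω b (J b) := inn_nonneg' ω J hpos b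
  set A := ω a (J a) with hAdef
  set C := ω a (J b) with hCdef
  have hsq : C ^ 2 ≤ A * ω b (J b) := by
    have h0 : 0 ≤ ω (A • b - C • a) (J (A • b - C • a)) :=
      inn_nonneg' ω J hpos _
    have hsymm : ω b (J a) = C := (inn_symm' ω J hanti hJ hcompat a b).symm
    simp only [map_sub, map_smul, LinearMap.sub_apply, LinearMap.smul_apply,
      smul_eq_mul] at h0
    rw [hsymm, ← hCdef, ← hAdef] at h0
    nlinarith [h0, hA]
  calc |C| = Real.sqrt (C ^ 2) := (Real.sqrt_sq_eq_abs C).symm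
    _ ≤ Real.sqrt (A * ω b (J b)) := Real.sqrt_le_sqrt hsq
    _ = Real.sqrt A * Real.sqrt (ω b (J b)) := Real.sqrt_mul hA.le _

end helpers

/-- For a compatible complex structure `J` on a symplectic vector space `(V, ω)`, with
induced inner product `⟨x,y⟩ = ω(x, Jy)`, any `x ∈ X` and `y ∈ X^ω` satisfy
`|⟨x,y⟩| ≤ |x|·|y|·√(2 − 2 cos ∠(X))`. -/


theorem stmt_1 {V : Type*} [AddCommGroup V] [Module ℝ V] [FiniteDimensional ℝ V]
    (ω : V →ₗ[ℝ] V →ₗ[ℝ] ℝ)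
    (hanti : ∀ x y : V, ω x y = - ω y x)
    (hnondeg : ∀ x : V, (∀ y : V, ω x y = 0) → x = 0)
    (J : V →ₗ[ℝ] V) (hJ : ∀ x : V, J (J x) = -x)
    (hcompat : ∀ x y : V, ω (J x) (J y) = ω x y)
    (hpos : ∀ x : V, x ≠ 0 → 0 < ω x (J x))
    (X : Submodule ℝ V) (x : V) (hx : x ∈ X)
    (y : V) (hy : ∀ x' ∈ X, ω x' y = 0) :
    |ω x (J y)| ≤ Real.sqrt (ω x (J x)) * Real.sqrt (ω y (J y)) *
      Real.sqrt (2 - 2 * Real.cos (subspaceAngle (fun a b => ω a (J b)) J X)) := by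
  rcases eq_or_ne x 0 with rfl | hx0
  · simp only [map_zero, LinearMap.zero_apply, abs_zero]
    positivity
  rcases eq_or_ne y 0 with rfl | hy0
  · simp only [map_zero, LinearMap.map_zero, abs_zero]
    positivity
  set inn : V → V → ℝ := fun a b => ω a (J b) with hinn
  set A := Real.sqrt (ω x (J x)) with hAdef
  set B := Real.sqrt (ω y (J y)) with hBdef
  have hA : 0 < A := Real.sqrt_pos.mpr (hpos x hx0)
  have hB : 0 < B := Real.sqrt_pos.mpr (hpos y hy0)
  set T := {φ : ℝ | ∃ x' ∈ X, x' ≠ 0 ∧ φ = vAngle inn x' (J x)} with hTdef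
  set S := {θ : ℝ | ∃ y' ∈ X.map J, y' ≠ 0 ∧
    θ = sInf {φ : ℝ | ∃ x' ∈ X, x' ≠ 0 ∧ φ = vAngle inn x' y'}} with hSdef
  have hΘ : subspaceAngle inn J X = sSup S := rfl
  have hJx0 : J x ≠ 0 := by
    intro h
    apply hx0
    have h2 := hJ x
    rw [h, map_zero] at h2
    exact neg_eq_zero.mp h2.symm
  have hTne : T.Nonempty := ⟨_, x, hx, hx0, rfl⟩
  have hTnonneg : ∀ φ ∈ T, 0 ≤ φ := by
    rintro φ ⟨x', _, _, rfl⟩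
    exact Real.arccos_nonneg _
  have hTpi : ∀ φ ∈ T, φ ≤ Real.pi := by
    rintro φ ⟨x', _, _, rfl⟩
    exact Real.arccos_le_pi _
  have hθ₀S : sInf T ∈ S := ⟨J x, Submodule.mem_map_of_mem hx, hJx0, rfl⟩
  have hSpi : ∀ θ ∈ S, θ ≤ Real.pi := by
    rintro θ ⟨y', hy'm, hy'0, rfl⟩
    obtain ⟨x'', hx''X, rfl⟩ := Submodule.mem_map.mp hy'm
    have hx''0 : x'' ≠ 0 := by rintro rfl; exact hy'0 (map_zero J)
    refine le_trans (csInf_le ?_ ⟨x'', hx''X, hx''0, rfl⟩) (Real.arccos_le_pi _)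
    exact ⟨0, by rintro φ ⟨x', _, _, rfl⟩; exact Real.arccos_nonneg _⟩
  have hSbdd : BddAbove S := ⟨Real.pi, hSpi⟩
  have hθΘ : sInf T ≤ sSup S := le_csSup hSbdd hθ₀S
  have hΘpi : sSup S ≤ Real.pi := csSup_le ⟨_, hθ₀S⟩ hSpi
  -- key estimate
  have key : ∀ φ ∈ T, |ω x (J y)| ≤ A * B * Real.sqrt (2 - 2 * Real.cos φ) := by
    rintro φ ⟨x', hx'X, hx'0, rfl⟩
    set b := Real.sqrt (ω x' (J x')) with hbdef
    have hb : 0 < b := Real.sqrt_pos.mpr (hpos x' hx'0)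
    set c := ω x' (J (J x)) with hcdef
    have hJxJx : ω (J x) (J (J x)) = ω x (J x) := hcompat x (J x)
    have hJyJy : ω (J y) (J (J y)) = ω y (J y) := hcompat y (J y)
    have hAsq : A ^ 2 = ω x (J x) := Real.sq_sqrt (inn_nonneg' ω J hpos x)
    have hbsq : b ^ 2 = ω x' (J x') := Real.sq_sqrt (inn_nonneg' ω J hpos x')
    have hBsq : B ^ 2 = ω y (J y) := Real.sq_sqrt (inn_nonneg' ω J hpos y)
    have hcs : |c| ≤ b * A := by
      have := inn_cauchy' ω J hanti hJ hcompat hpos x' (J x)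
      rwa [hJxJx, ← hAdef, ← hbdef] at this
    have hq1 : |c / (b * A)| ≤ 1 := by
      rw [abs_div, abs_of_pos (mul_pos hb hA)]
      exact div_le_one_of_le₀ hcs (mul_pos hb hA).le
    have hcos : Real.cos (vAngle inn x' (J x)) = c / (b * A) := by
      rw [vAngle]
      show Real.cos (Real.arccos (ω x' (J (J x)) /
        (Real.sqrt (ω x' (J x')) * Real.sqrt (ω (J x) (J (J x)))))) = _
      rw [hJxJx]
      exact Real.cos_arccos (neg_le_of_abs_le hq1) (le_of_abs_le hq1)
    set z := b • (J x) - A • x' with hzdef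
    have hccx : ω x x' = c := by
      rw [hcdef, hJ x, map_neg, hanti x', neg_neg]
    have hzz : ω z (J z) = 2 * A ^ 2 * b ^ 2 - 2 * A * b * c := by
      simp only [hzdef, map_sub, map_smul, LinearMap.sub_apply, LinearMap.smul_apply,
        smul_eq_mul]
      rw [hJxJx, hcompat x x', hccx]
      rw [← hAsq, ← hbsq] at *
      ring_nf
      rw [← hcdef]; ring
    have hzy : ω z (J (J y)) = b * ω x (J y) := by
      simp only [hzdef, map_sub, map_smul, LinearMap.sub_apply, LinearMap.smul_apply,
        smul_eq_mul]
      have h1 : ω (J x) (J (J y)) = ω x (J y) := hcompat x (J y)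
      have h2 : ω x' (J (J y)) = 0 := by
        rw [hJ y, map_neg, hy x' hx'X, neg_zero]
      rw [h1, h2]; ring
    have hCS := inn_cauchy' ω J hanti hJ hcompat hpos z (J y)
    rw [hzy, hJyJy, ← hBdef, abs_mul, abs_of_pos hb] at hCS
    have hqle : c / (b * A) ≤ 1 := le_of_abs_le hq1
    have hzznn : (0:ℝ) ≤ 2 - 2 * (c / (b * A)) := by linarith
    have hzzeq : Real.sqrt (ω z (J z)) = A * b * Real.sqrt (2 - 2 * (c / (b * A))) := by
      rw [hzz]
      have : 2 * A ^ 2 * b ^ 2 - 2 * A * b * c = (A * b) ^ 2 * (2 - 2 * (c / (b * A))) := by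
        field_simp
      rw [this, Real.sqrt_mul (sq_nonneg _), Real.sqrt_sq (mul_pos hA hb).le]
    rw [hzzeq] at hCS
    rw [hcos]
    have h5 : b * |ω x (J y)| ≤
        b * (A * B * Real.sqrt (2 - 2 * (c / (b * A)))) := by
      calc b * |ω x (J y)| ≤ A * b * Real.sqrt (2 - 2 * (c / (b * A))) * B := hCS
        _ = b * (A * B * Real.sqrt (2 - 2 * (c / (b * A)))) := by ring
    exact le_of_mul_le_mul_left h5 hb
  -- pass to the supremum via continuity
  rw [hΘ]
  set Θ := sSup S with hΘdef
  have hΘ0 : 0 ≤ Θ := le_trans (le_csInf hTne hTnonneg) hθΘ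
  refine le_of_forall_pos_le_add fun ε hε => ?_
  have hg : ContinuousAt (fun t => A * B * Real.sqrt (2 - 2 * Real.cos t)) Θ := by
    fun_prop
  obtain ⟨δ, hδ, hδ'⟩ := Metric.continuousAt_iff.mp hg ε hε
  obtain ⟨φ, hφT, hφlt⟩ := Real.lt_sInf_add_pos hTne hδ
  have hφΘδ : φ < Θ + δ := lt_of_lt_of_le hφlt (by linarith)
  rcases le_or_gt φ Θ with hle | hlt
  · have hcosle : Real.cos Θ ≤ Real.cos φ :=
      Real.cos_le_cos_of_nonneg_of_le_pi (hTnonneg φ hφT) hΘpi hle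
    have h1 := key φ hφT
    have h2 : Real.sqrt (2 - 2 * Real.cos φ) ≤ Real.sqrt (2 - 2 * Real.cos Θ) :=
      Real.sqrt_le_sqrt (by linarith)
    nlinarith [h1, hε, mul_le_mul_of_nonneg_left h2 (mul_pos hA hB).le]
  · have hdist : dist φ Θ < δ := by
      rw [Real.dist_eq, abs_of_pos (by linarith : (0:ℝ) < φ - Θ)]
      linarith
    have h3 := hδ' hdist
    rw [Real.dist_eq] at h3
    have h4 : A * B * Real.sqrt (2 - 2 * Real.cos φ) ≤
        A * B * Real.sqrt (2 - 2 * Real.cos Θ) + ε := by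
      have := abs_lt.mp h3
      linarith [this.1, this.2]
    exact le_trans (key φ hφT) h4
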